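/- Let I be a network coding instance that is (0, R, n)-feasible with a corresponding network code {X_f : f ∈ S ∪ E}, and let e* be an edge of I with capacity R_{e*}. If H(X_S | X_{e*}) = Σ_{i∈S} H(X_i | X_{e*}), then the instance I' obtained from I by removing edge e* is (0, R − R_{e*}·1, n)-feasible, where (R − R_{e*}·1)_i = max(0, R_i − R_{e*}). -/

import Mathlib

open scoped Classical
open Finset

noncomputable section

/-- A network coding instance `I = (N, S, T, M)`: a finite directed acyclic graph with
edge capacities, source nodes (no incoming edges), terminal nodes (no outgoing edges),
and a demand relation (`demands s t` means terminal `t` demands source `s`). -/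
structure NetworkInstance where
  V : Type
  [fintypeV : Fintype V]
  [decEqV : DecidableEq V]
  E : Finset (V × V)
  cap : V × V → ℝ
  cap_pos : ∀ e ∈ E, 0 < cap e
  S : Finset V
  T : Finset V
  demands : V → V → Prop
  src_no_in : ∀ s ∈ S, ∀ e ∈ E, e.2 ≠ s
  ter_no_out : ∀ t ∈ T, ∀ e ∈ E, e.1 ≠ t
  disjointST : Disjoint S T
  acyclic : ∃ ord : V → ℕ, ∀ e ∈ E, ord e.1 < ord e.2

attribute [instance] NetworkInstance.fintypeV NetworkInstance.decEqV

/-- A network code of blocklength `n` and rate vector `R` on the instance `I`.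
Sources are independent and uniform on their (finite, nonempty) alphabets, which is modelled
by taking the whole product of the source alphabets as the (uniform) sample space.
`ge e` is the global encoding function of edge `e` (a function of the source message vector),
`dec t` the decoding function of terminal `t` (a function of the messages on incoming edges
of `t`, producing reconstructions of the demanded sources).
`local_enc` states that the message on an edge `e = (u,v)` is determined by the messages on
the incoming edges of `u` (together with the source message at `u`, when `u` is a source).
`rate` states `H(X_i) = log₂|𝒳_i| ≥ n·R_i`, and `capBound` states `log₂|𝒳_e| ≤ n·R_e`. -/
structure NetworkCode (I : NetworkInstance) (R : I.V → ℝ) (n : ℕ) where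
  srcA : I.V → Type
  edgeA : I.V × I.V → Type
  [finSrc : ∀ v, Fintype (srcA v)]
  [finEdge : ∀ e, Fintype (edgeA e)]
  [neSrc : ∀ v, Nonempty (srcA v)]
  [neEdge : ∀ e, Nonempty (edgeA e)]
  ge : (e : I.V × I.V) → ((s : {v // v ∈ I.S}) → srcA s.1) → edgeA e
  dec : (t : {v // v ∈ I.T}) →
    ((f : {e : I.V × I.V // e ∈ I.E ∧ e.2 = t.1}) → edgeA f.1) →
    ((s : {v // v ∈ I.S ∧ I.demands v t.1}) → srcA s.1)
  local_enc : ∀ e ∈ I.E, ∀ x y : ((s : {v // v ∈ I.S}) → srcA s.1),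
    (∀ s : {v // v ∈ I.S}, (s : I.V) = e.1 → x s = y s) →
    (∀ f ∈ I.E, f.2 = e.1 → ge f x = ge f y) →
    ge e x = ge e y
  rate : ∀ v ∈ I.S, (2 : ℝ) ^ ((n : ℝ) * R v) ≤ Fintype.card (srcA v)
  capBound : ∀ e ∈ I.E, (Fintype.card (edgeA e) : ℝ) ≤ (2 : ℝ) ^ ((n : ℝ) * I.cap e)

attribute [instance] NetworkCode.finSrc NetworkCode.finEdge NetworkCode.neSrc NetworkCode.neEdge

/-- The source message vector space `𝒳_S = ∏ 𝒳_i`; the sources being independent and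
uniform, the probability space is the uniform distribution on `Msg`. -/
abbrev NetworkCode.Msg {I : NetworkInstance} {R : I.V → ℝ} {n : ℕ} (C : NetworkCode I R n) : Type :=
  (s : {v // v ∈ I.S}) → C.srcA s.1

/-- Terminal `t` decodes the source vector `x` correctly. -/
def NetworkCode.Correct {I : NetworkInstance} {R : I.V → ℝ} {n : ℕ} (C : NetworkCode I R n)
    (t : {v // v ∈ I.T}) (x : C.Msg) : Prop :=
  C.dec t (fun f => C.ge f.1 x) = fun s : {v : I.V // v ∈ I.S ∧ I.demands v t.1} => x ⟨s.1, s.2.1⟩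

/-- `x` is "good": every terminal decodes it correctly. -/
def NetworkCode.Good {I : NetworkInstance} {R : I.V → ℝ} {n : ℕ} (C : NetworkCode I R n)
    (x : C.Msg) : Prop := ∀ t, C.Correct t x

/-- The code has decoding error probability at most `ε` at every terminal
(w.r.t. the uniform distribution on source messages). -/
def NetworkCode.Achieves {I : NetworkInstance} {R : I.V → ℝ} {n : ℕ} (C : NetworkCode I R n)
    (ε : ℝ) : Prop :=
  ∀ t : {v // v ∈ I.T},
    ((Finset.univ.filter fun x : C.Msg => ¬ C.Correct t x).card : ℝ) ≤ ε * Fintype.card C.Msg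

/-- `I` is `(ε, R, n)`-feasible. -/
def Feasible (I : NetworkInstance) (ε : ℝ) (R : I.V → ℝ) (n : ℕ) : Prop :=
  ∃ C : NetworkCode I R n, C.Achieves ε

/-- The instance `I'` obtained from `I` by removing the edge `e`. -/
def NetworkInstance.removeEdge (I : NetworkInstance) (e : I.V × I.V) : NetworkInstance where
  V := I.V
  fintypeV := I.fintypeV
  decEqV := I.decEqV
  E := I.E.erase e
  cap := I.cap
  cap_pos := fun f hf => I.cap_pos f (Finset.mem_of_mem_erase hf)
  S := I.S
  T := I.T
  demands := I.demands
  src_no_in := fun s hs f hf => I.src_no_in s hs f (Finset.mem_of_mem_erase hf)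
  ter_no_out := fun t ht f hf => I.ter_no_out t ht f (Finset.mem_of_mem_erase hf)
  disjointST := I.disjointST
  acyclic := ⟨I.acyclic.choose, fun f hf => I.acyclic.choose_spec f (Finset.mem_of_mem_erase hf)⟩

/-- The reduced rate vector `R - R_{e*}·1`, i.e. `i ↦ max 0 (R_i - R_{e*})`. -/
def reducedRate (I : NetworkInstance) (R : I.V → ℝ) (e : I.V × I.V) : I.V → ℝ :=
  fun v => max 0 (R v - I.cap e)

/-- Probability that the random variable `Z` (on the finite uniform sample space `Ω`)
takes the value `z`. -/
def prob {Ω : Type*} [Fintype Ω] {α : Type*} (Z : Ω → α) (z : α) : ℝ :=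
  ((Finset.univ.filter fun ω => Z ω = z).card : ℝ) / (Fintype.card Ω : ℝ)

/-- Shannon entropy (in bits) of a random variable `Z` on the finite uniform sample space `Ω`. -/
def Hent {Ω : Type*} [Fintype Ω] {α : Type*} [Fintype α] (Z : Ω → α) : ℝ :=
  (∑ z : α, Real.negMulLog (prob Z z)) / Real.log 2

/-- Conditional Shannon entropy `H(Z | W) = H(Z, W) - H(W)`. -/
def condH {Ω : Type*} [Fintype Ω] {α β : Type*} [Fintype α] [Fintype β]
    (Z : Ω → α) (W : Ω → β) : ℝ :=
  Hent (fun ω => (Z ω, W ω)) - Hent W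

lemma prob_eq_of_filter_eq {Ω : Type*} [Fintype Ω] {α : Type*} (Z : Ω → α) (z : α)
    (s : Finset Ω) (h : ∀ ω, Z ω = z ↔ ω ∈ s) :
    prob Z z = (s.card : ℝ) / (Fintype.card Ω : ℝ) := by
  unfold prob
  refine congrArg₂ (· / ·) ?_ rfl
  refine congrArg _ (congrArg Finset.card ?_)
  ext ω
  simp only [Finset.mem_filter, Finset.mem_univ, true_and]
  exact h ω

open Real in
lemma box_subset_fiber {ι : Type} [Fintype ι] {α : ι → Type} [∀ i, Fintype (α i)]
    [iΩ : Fintype ((i : ι) → α i)]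
    {Z : Type} [Fintype Z] (g : ((i : ι) → α i) → Z)
    (hindep : condH (fun x : (i : ι) → α i => x) g
      = ∑ i, condH (fun x : (i : ι) → α i => x i) g)
    (z : Z) (x : (i : ι) → α i)
    (hne : ∃ y, g y = z)
    (hx : ∀ i, ∃ y, g y = z ∧ y i = x i) : g x = z := by
  have hi : iΩ = Pi.instFintype := Subsingleton.elim _ _
  subst hi
  have hΩ : Nonempty ((i : ι) → α i) := ⟨x⟩
  set N : ℕ := Fintype.card ((i : ι) → α i) with hNdef
  have hN : 0 < N := Fintype.card_pos
  have hNR : (0:ℝ) < N := by exact_mod_cast hN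
  set F : Z → Finset ((i : ι) → α i) := fun w => univ.filter fun y => g y = w with hF
  set f : Z → ℕ := fun w => (F w).card with hfdef
  set c : (i : ι) → α i → Z → ℕ :=
    fun i a w => (univ.filter fun y : (i : ι) → α i => g y = w ∧ y i = a).card with hc
  -- basic counting
  have hcf : ∀ i a w, c i a w ≤ f w := by
    intro i a w
    apply Finset.card_le_card
    intro y hy
    simp only [hF, Finset.mem_filter] at *
    exact ⟨hy.1, hy.2.1⟩
  have h_sum_c : ∀ i w, ∑ a, c i a w = f w := by
    intro i w
    show _ = (F w).card
    rw [Finset.card_eq_sum_card_fiberwise (f := fun y : (i : ι) → α i => y i) (t := univ)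
      (fun x _ => mem_univ _)]
    refine Finset.sum_congr rfl fun a _ => ?_
    simp only [hc, hF, Finset.filter_filter]
  have h_sum_f : ∑ w, f w = N := by
    show _ = Fintype.card ((i : ι) → α i)
    rw [← Finset.card_univ,
      Finset.card_eq_sum_card_fiberwise (f := g) (t := univ) (fun x _ => mem_univ _)]
  -- probability computations
  have hprob_g : ∀ w, prob g w = (f w : ℝ) / N := fun w => rfl
  have hprob_pair : ∀ i (a : α i) w,
      prob (fun ω : (i : ι) → α i => (ω i, g ω)) (a, w) = (c i a w : ℝ) / N := by
    intro i a w
    exact prob_eq_of_filter_eq _ _ (univ.filter fun ω : (i : ι) → α i => g ω = w ∧ ω i = a)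
      (by intro ω; simp only [Finset.mem_filter, Finset.mem_univ, true_and, Prod.ext_iff]
          exact and_comm)
  have hprob_diag : ∀ (y : (i : ι) → α i) w,
      prob (fun ω : (i : ι) → α i => (ω, g ω)) (y, w) = if g y = w then 1/(N:ℝ) else 0 := by
    intro y w
    split_ifs with h
    · rw [prob_eq_of_filter_eq _ _ {y} (by
        intro ω
        simp only [Prod.ext_iff, Finset.mem_singleton]
        constructor
        · rintro ⟨h1, _⟩; exact h1
        · rintro rfl; exact ⟨rfl, h⟩)]
      rw [Finset.card_singleton, ← hNdef, Nat.cast_one]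
    · rw [prob_eq_of_filter_eq _ _ ∅ (by
        intro ω
        simp only [Prod.ext_iff, Finset.notMem_empty, iff_false, not_and]
        rintro rfl; exact h)]
      simp only [Finset.card_empty, Nat.cast_zero, zero_div]
  -- entropy values
  set G : ℝ := ∑ w, Real.negMulLog ((f w : ℝ)/N) with hGdef
  have hG : Hent g = G / Real.log 2 := by
    unfold Hent
    rw [hGdef]
    exact congrArg (· / Real.log 2) (Finset.sum_congr rfl fun w _ => by rw [hprob_g])
  set J : ι → ℝ := fun i => ∑ w, ∑ a, Real.negMulLog ((c i a w : ℝ)/N) with hJdef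
  have hJ : ∀ i, Hent (fun ω : (i : ι) → α i => (ω i, g ω)) = J i / Real.log 2 := by
    intro i
    unfold Hent
    congr 1
    rw [Fintype.sum_prod_type, Finset.sum_comm]
    exact Finset.sum_congr rfl fun w _ => Finset.sum_congr rfl fun a _ => by rw [hprob_pair]
  have hDiag : Hent (fun ω : (i : ι) → α i => (ω, g ω)) = Real.log N / Real.log 2 := by
    unfold Hent
    congr 1
    rw [Fintype.sum_prod_type]
    have hrow : ∀ y : (i : ι) → α i,
        ∑ w, Real.negMulLog (prob (fun ω : (i : ι) → α i => (ω, g ω)) (y, w))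
        = Real.negMulLog (1/(N:ℝ)) := by
      intro y
      have hterm : ∀ w, Real.negMulLog (prob (fun ω : (i : ι) → α i => (ω, g ω)) (y, w))
          = if g y = w then Real.negMulLog (1/(N:ℝ)) else 0 := by
        intro w
        rw [hprob_diag, apply_ite Real.negMulLog, Real.negMulLog_zero]
      rw [Finset.sum_congr rfl fun w _ => hterm w, Finset.sum_ite_eq univ (g y)
        (fun _ => Real.negMulLog (1/(N:ℝ))), if_pos (mem_univ _)]
    rw [Finset.sum_congr rfl fun y _ => hrow y, Finset.sum_const, Finset.card_univ, ← hNdef,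
      nsmul_eq_mul, Real.negMulLog, one_div, Real.log_inv]
    field_simp
  -- the equality hypothesis, in natural-log units
  have hlog2 : Real.log 2 ≠ 0 := (Real.log_pos one_lt_two).ne'
  have hE : Real.log N - G = ∑ i, (J i - G) := by
    have h1 : condH (fun x : (i : ι) → α i => x) g = (Real.log N - G) / Real.log 2 := by
      unfold condH
      rw [hDiag, hG, div_sub_div_same]
    have h2 : ∀ i, condH (fun x : (i : ι) → α i => x i) g = (J i - G) / Real.log 2 := by
      intro i
      unfold condH
      rw [hJ, hG, div_sub_div_same]
    rw [h1, Finset.sum_congr rfl fun i _ => h2 i, ← Finset.sum_div] at hindep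
    have := congrArg (fun r => r * Real.log 2) hindep
    simpa [div_mul_cancel₀, hlog2] using this
  -- scalar helper
  have hNnl : ∀ q : ℕ, (N:ℝ) * Real.negMulLog ((q:ℝ)/N)
      = -((q:ℝ) * Real.log q) + (q:ℝ) * Real.log N := by
    intro q
    rcases Nat.eq_zero_or_pos q with h|h
    · subst h; simp [Real.negMulLog]
    · have hq : (0:ℝ) < q := by exact_mod_cast h
      rw [Real.negMulLog, Real.log_div hq.ne' hNR.ne']
      field_simp
      ring
  -- grouping sums over a fiber by the value of the i-th coordinate
  have hgroup : ∀ (i : ι) w (h : α i → ℝ),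
      ∑ y ∈ F w, h (y i) = ∑ a, (c i a w : ℝ) * h a := by
    intro i w h
    rw [← Finset.sum_fiberwise (F w) (fun y => y i) (fun y => h (y i))]
    refine Finset.sum_congr rfl fun a _ => ?_
    rw [Finset.sum_congr rfl (fun y hy => by rw [(Finset.mem_filter.mp hy).2] :
      ∀ y ∈ (F w).filter fun y => y i = a, h (y i) = h a)]
    rw [Finset.sum_const, nsmul_eq_mul]
    congr 2
    show ((F w).filter fun y => y i = a).card = c i a w
    rw [hc]
    congr 1
    rw [hF]
    simp only [Finset.filter_filter]
  -- per-fiber identities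
  have hI2 : ∀ (i : ι) w,
      (N:ℝ) * ((∑ a, Real.negMulLog ((c i a w : ℝ)/N)) - Real.negMulLog ((f w : ℝ)/N))
      = ∑ y ∈ F w, Real.log ((f w : ℝ) / c i (y i) w) := by
    intro i w
    have hsc : ∑ a, (c i a w : ℝ) = (f w : ℝ) := by exact_mod_cast h_sum_c i w
    have hper : ∀ a, (c i a w : ℝ) * Real.log ((f w : ℝ)/(c i a w : ℝ))
        = (c i a w : ℝ) * Real.log (f w) - (c i a w : ℝ) * Real.log (c i a w) := by
      intro a
      rcases Nat.eq_zero_or_pos (c i a w) with h|h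
      · rw [h]; simp
      · have hcpos : (0:ℝ) < (c i a w : ℝ) := by exact_mod_cast h
        have hfpos : (0:ℝ) < (f w : ℝ) := by
          have := lt_of_lt_of_le h (hcf i a w); exact_mod_cast this
        rw [Real.log_div hfpos.ne' hcpos.ne']
        ring
    rw [hgroup i w (fun b => Real.log ((f w : ℝ) / c i b w)), mul_sub, Finset.mul_sum]
    simp only [hNnl]
    rw [Finset.sum_congr rfl fun a _ => hper a, Finset.sum_sub_distrib,
      ← Finset.sum_mul, hsc, Finset.sum_add_distrib, ← Finset.sum_mul, hsc]
    have : ∑ a, -((c i a w : ℝ) * Real.log (c i a w))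
        = -∑ a, (c i a w : ℝ) * Real.log (c i a w) := by
      rw [← Finset.sum_neg_distrib]
    rw [this]
    ring
  have hI3 : (N:ℝ) * (Real.log N - G)
      = ∑ w, (f w : ℝ) * Real.log (f w) := by
    rw [hGdef, mul_sub, Finset.mul_sum]
    simp only [hNnl]
    have hsf : ∑ w, (f w : ℝ) = (N : ℝ) := by exact_mod_cast h_sum_f
    rw [Finset.sum_add_distrib, ← Finset.sum_mul, hsf]
    have : ∑ w, -((f w : ℝ) * Real.log (f w))
        = -∑ w, (f w : ℝ) * Real.log (f w) := by
      rw [← Finset.sum_neg_distrib]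
    rw [this]
    ring
  -- the slack functional
  set T : Z → ℝ := fun w => ∑ y ∈ F w,
    ((∑ i, Real.log ((f w : ℝ) / c i (y i) w)) - Real.log (f w)) with hTdef
  have hTexp : ∀ w, T w = (∑ i, ∑ y ∈ F w, Real.log ((f w : ℝ)/ c i (y i) w))
      - (f w : ℝ) * Real.log (f w) := by
    intro w
    show (∑ y ∈ F w, ((∑ i, Real.log ((f w : ℝ) / c i (y i) w)) - Real.log (f w))) = _
    rw [Finset.sum_sub_distrib, Finset.sum_comm, Finset.sum_const, nsmul_eq_mul]
  have hL : ∑ w, T w = 0 := by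
    have h1 : ∑ w, T w = (∑ i, (N:ℝ) * (J i - G)) - (N:ℝ) * (Real.log N - G) := by
      rw [Finset.sum_congr rfl fun w _ => hTexp w, Finset.sum_sub_distrib, Finset.sum_comm,
        hI3]
      congr 1
      refine Finset.sum_congr rfl fun i _ => ?_
      have h2 : J i - G = ∑ w, ((∑ a, Real.negMulLog ((c i a w : ℝ)/N))
          - Real.negMulLog ((f w : ℝ)/N)) := by
        rw [Finset.sum_sub_distrib, hJdef, hGdef]
      rw [h2, Finset.mul_sum]
      exact Finset.sum_congr rfl fun w _ => (hI2 i w).symm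
    rw [h1, ← Finset.mul_sum, ← hE]
    ring
  -- the product measure
  set m : Z → ((i : ι) → α i) → ℝ := fun w y => ∏ i, ((c i (y i) w : ℝ) / (f w : ℝ)) with hm
  have hm0 : ∀ w y, 0 ≤ m w y := fun w y =>
    Finset.prod_nonneg fun i _ => div_nonneg (Nat.cast_nonneg _) (Nat.cast_nonneg _)
  have hmsum : ∀ w, 0 < f w → ∑ y : (i : ι) → α i, m w y = 1 := by
    intro w hw
    have hfR : (0:ℝ) < f w := by exact_mod_cast hw
    rw [hm]
    calc ∑ y : (i : ι) → α i, ∏ i, ((c i (y i) w : ℝ)/ (f w : ℝ))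
        = ∑ y ∈ Fintype.piFinset (fun i : ι => (univ : Finset (α i))),
            ∏ i, ((c i (y i) w : ℝ)/ (f w : ℝ)) := by rw [Fintype.piFinset_univ]
      _ = ∏ i, ∑ a, ((c i a w : ℝ)/ (f w : ℝ)) := (Finset.prod_univ_sum (fun i : ι => (univ : Finset (α i))) (fun i a => (c i a w : ℝ) / (f w : ℝ))).symm
      _ = 1 := by
          refine Finset.prod_eq_one fun i _ => ?_
          rw [← Finset.sum_div]
          rw [show ∑ a, (c i a w : ℝ) = (f w : ℝ) by exact_mod_cast h_sum_c i w]
          exact div_self hfR.ne'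
  -- pointwise log inequality on the fiber
  have hpt : ∀ w, ∀ y ∈ F w, 1 - (f w : ℝ) * m w y
      ≤ (∑ i, Real.log ((f w : ℝ)/ c i (y i) w)) - Real.log (f w) := by
    intro w y hy
    have hfw : 0 < f w := Finset.card_pos.mpr ⟨y, hy⟩
    have hfR : (0:ℝ) < f w := by exact_mod_cast hfw
    have hcy : ∀ i, (0:ℝ) < (c i (y i) w : ℝ) := by
      intro i
      have hmem : y ∈ univ.filter fun y' : (i : ι) → α i => g y' = w ∧ y' i = y i := by
        simp only [Finset.mem_filter, Finset.mem_univ, true_and]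
        have := Finset.mem_filter.mp (by rw [hF] at hy; exact hy)
        exact ⟨this.2, trivial⟩
      have : 0 < c i (y i) w := Finset.card_pos.mpr ⟨y, hmem⟩
      exact_mod_cast this
    have hmpos : 0 < m w y := Finset.prod_pos fun i _ => div_pos (hcy i) hfR
    have ht : 0 < (f w : ℝ) * m w y := mul_pos hfR hmpos
    have hlog := Real.log_le_sub_one_of_pos ht
    have hEq : (∑ i, Real.log ((f w : ℝ)/ c i (y i) w)) - Real.log (f w)
        = - Real.log ((f w : ℝ) * m w y) := by
      rw [Real.log_mul hfR.ne' hmpos.ne', hm,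
        Real.log_prod (fun i _ => (div_pos (hcy i) hfR).ne')]
      rw [Finset.sum_congr rfl (fun i _ => by rw [← Real.log_inv, inv_div] :
        ∀ i ∈ univ, Real.log ((f w : ℝ)/ c i (y i) w) = -Real.log ((c i (y i) w : ℝ)/ f w))]
      rw [Finset.sum_neg_distrib]
      ring
    rw [hEq]
    linarith
  have hTnn : ∀ w, 0 ≤ T w := by
    intro w
    rcases Nat.eq_zero_or_pos (f w) with h|h
    · have hemp : F w = ∅ := Finset.card_eq_zero.mp h
      show (0:ℝ) ≤ ∑ y ∈ F w, ((∑ i, Real.log ((f w : ℝ) / c i (y i) w)) - Real.log (f w))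
      rw [hemp, Finset.sum_empty]
    · have hfR : (0:ℝ) < f w := by exact_mod_cast h
      have h1 : ∑ y ∈ F w, (1 - (f w : ℝ) * m w y) ≤ T w := Finset.sum_le_sum (hpt w)
      have h2 : ∑ y ∈ F w, (1 - (f w : ℝ) * m w y)
          = (f w : ℝ) - (f w : ℝ) * ∑ y ∈ F w, m w y := by
        rw [Finset.sum_sub_distrib, Finset.sum_const, nsmul_eq_mul, mul_one, ← Finset.mul_sum]
      have h3 : ∑ y ∈ F w, m w y ≤ 1 := by
        rw [← hmsum w h]
        exact Finset.sum_le_sum_of_subset_of_nonneg (Finset.subset_univ _)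
          fun y _ _ => hm0 w y
      nlinarith
  -- extract the per-fiber equality at `z`
  have hT0 : T z = 0 :=
    (Finset.sum_eq_zero_iff_of_nonneg fun w _ => hTnn w).mp hL z (mem_univ z)
  obtain ⟨y0, hy0⟩ := hne
  have hfz : 0 < f z := by
    apply Finset.card_pos.mpr
    exact ⟨y0, by rw [hF]; simp [hy0]⟩
  have hfzR : (0:ℝ) < f z := by exact_mod_cast hfz
  have hge1 : 1 ≤ ∑ y ∈ F z, m z y := by
    have h1 : ∑ y ∈ F z, (1 - (f z : ℝ) * m z y) ≤ T z := Finset.sum_le_sum (hpt z)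
    rw [hT0] at h1
    have h2 : ∑ y ∈ F z, (1 - (f z : ℝ) * m z y)
        = (f z : ℝ) - (f z : ℝ) * ∑ y ∈ F z, m z y := by
      rw [Finset.sum_sub_distrib, Finset.sum_const, nsmul_eq_mul, mul_one, ← Finset.mul_sum]
    rw [h2] at h1
    nlinarith
  have hout : ∀ y, y ∉ F z → m z y = 0 := by
    have hsd : ∑ y ∈ univ \ F z, m z y = ∑ y : (i : ι) → α i, m z y - ∑ y ∈ F z, m z y :=
      Finset.sum_sdiff_eq_sub (Finset.subset_univ _)
    rw [hmsum z hfz] at hsd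
    have hzero : ∑ y ∈ univ \ F z, m z y = 0 :=
      le_antisymm (by rw [hsd]; linarith)
        (Finset.sum_nonneg fun y _ => hm0 z y)
    intro y hy
    exact (Finset.sum_eq_zero_iff_of_nonneg fun y _ => hm0 z y).mp hzero y
      (Finset.mem_sdiff.mpr ⟨mem_univ _, hy⟩)
  -- conclude
  by_contra hgx
  have hmx : 0 < m z x := by
    rw [hm]
    refine Finset.prod_pos fun i _ => div_pos ?_ hfzR
    obtain ⟨y, hgy, hyi⟩ := hx i
    have hmem : y ∈ univ.filter fun y' : (i : ι) → α i => g y' = z ∧ y' i = x i := by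
      simp only [Finset.mem_filter, Finset.mem_univ, true_and]
      exact ⟨hgy, hyi⟩
    have : 0 < c i (x i) z := Finset.card_pos.mpr ⟨y, hmem⟩
    exact_mod_cast this
  have hxout : x ∉ F z := by
    rw [hF]
    simp only [Finset.mem_filter, Finset.mem_univ, true_and]
    exact hgx
  exact hmx.ne' (hout x hxout)


section Construction

variable (I : NetworkInstance) (R : I.V → ℝ) (n : ℕ) (C : NetworkCode I R n)
  (estar : I.V × I.V) (z0 : C.edgeA estar)

/-- The support of source `s` on the fiber `{X_{e*} = z0}`. -/
def srcSupp (s : {v // v ∈ I.S}) : Finset (C.srcA s.1) :=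
  (Finset.univ.filter fun y : C.Msg => C.ge estar y = z0).image fun y => y s

/-- The restricted source alphabet at a node. -/
def rSrcA (v : I.V) : Type :=
  {a : C.srcA v // ∀ h : v ∈ I.S, a ∈ srcSupp I R n C estar z0 ⟨v, h⟩}

instance rSrcA_fintype (v : I.V) : Fintype (rSrcA I R n C estar z0 v) :=
  Subtype.fintype _

/-- Restricted message vectors. -/
def rMsg : Type := (s : {v // v ∈ I.S}) → rSrcA I R n C estar z0 s.1

instance rMsg_fintype : Fintype (rMsg I R n C estar z0) :=
  Pi.instFintype

/-- Embedding of restricted message vectors into the original ones. -/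
def emb (x : rMsg I R n C estar z0) : C.Msg := fun s => (x s).1

/-- Global encoders of the restricted code. -/
def rGe (e : I.V × I.V) (x : rMsg I R n C estar z0) : C.edgeA e :=
  C.ge e (emb I R n C estar z0 x)

/-- Decoders of the restricted code: plug in the constant `z0` for the removed edge. -/
def rDec (hNE : ∀ v : I.V, Nonempty (rSrcA I R n C estar z0 v)) (t : {v // v ∈ I.T})
    (msgs : (f : {e : I.V × I.V // e ∈ I.E.erase estar ∧ e.2 = t.1}) → C.edgeA f.1)
    (s : {v // v ∈ I.S ∧ I.demands v t.1}) : rSrcA I R n C estar z0 s.1 :=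
  let d := C.dec t (fun fe => if h : fe.1 = estar
      then cast (congrArg C.edgeA h.symm) z0
      else msgs ⟨fe.1, ⟨Finset.mem_erase.mpr ⟨h, fe.2.1⟩, fe.2.2⟩⟩) s
  if hd : ∀ hS : s.1 ∈ I.S, d ∈ srcSupp I R n C estar z0 ⟨s.1, hS⟩ then ⟨d, hd⟩
  else Classical.choice (hNE s.1)

end Construction

set_option maxHeartbeats 1000000

/-- **Corollary 3.** If `I` is `(0,R,n)`-feasible with code `C` and the sources are
conditionally independent given the message on edge `e*`,
i.e. `H(X_S | X_{e*}) = Σ_{i∈S} H(X_i | X_{e*})`, then removing `e*` leaves the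
instance `(0, R - R_{e*}·1, n)`-feasible. -/
theorem local_edge_removal_of_cond_indep
    (I : NetworkInstance) (R : I.V → ℝ) (n : ℕ)
    (C : NetworkCode I R n) (hfeas : C.Achieves 0)
    (estar : I.V × I.V) (he : estar ∈ I.E)
    (hindep : condH (fun x : C.Msg => x) (C.ge estar)
      = ∑ s : {v // v ∈ I.S}, condH (fun x : C.Msg => x s) (C.ge estar)) :
    Feasible (I.removeEdge estar) 0 (reducedRate I R estar) n := by
  -- zero error means every message decodes correctly at every terminal
  have hall : ∀ (t : {v // v ∈ I.T}) (x : C.Msg), C.Correct t x := by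
    intro t x
    by_contra hc
    have h1 := hfeas t
    rw [zero_mul] at h1
    have h2 : x ∈ univ.filter fun x : C.Msg => ¬ C.Correct t x :=
      Finset.mem_filter.mpr ⟨mem_univ _, hc⟩
    have h3 : 0 < ((univ.filter fun x : C.Msg => ¬ C.Correct t x).card : ℝ) := by
      exact_mod_cast Finset.card_pos.mpr ⟨x, h2⟩
    linarith
  have hMsgNE : Nonempty C.Msg := ⟨fun s => Classical.arbitrary _⟩
  have hMsgPos : 0 < Fintype.card C.Msg := Fintype.card_pos
  -- choose the edge value with the largest fiber
  obtain ⟨z0, -, hmax⟩ := Finset.exists_max_image (univ : Finset (C.edgeA estar))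
    (fun w => (univ.filter fun x : C.Msg => C.ge estar x = w).card)
    ⟨Classical.arbitrary _, mem_univ _⟩
  set Fz : Finset C.Msg := univ.filter fun y : C.Msg => C.ge estar y = z0 with hFz
  have hNle : Fintype.card C.Msg ≤ Fintype.card (C.edgeA estar) * Fz.card := by
    calc Fintype.card C.Msg
        = ∑ w, (univ.filter fun x : C.Msg => C.ge estar x = w).card := by
          rw [← Finset.card_univ, Finset.card_eq_sum_card_fiberwise (f := C.ge estar)
            (t := univ) (fun x _ => mem_univ _)]
      _ ≤ ∑ _w : C.edgeA estar, Fz.card := Finset.sum_le_sum fun w _ => hmax w (mem_univ w)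
      _ = Fintype.card (C.edgeA estar) * Fz.card := by
          rw [Finset.sum_const, Finset.card_univ, smul_eq_mul]
  have hFzpos : 0 < Fz.card := by
    rcases Nat.eq_zero_or_pos Fz.card with h|h
    · rw [h, mul_zero] at hNle; omega
    · exact h
  obtain ⟨y0, hy0mem⟩ := Finset.card_pos.mp hFzpos
  have hy0 : C.ge estar y0 = z0 := (Finset.mem_filter.mp hy0mem).2
  -- every point of the product of supports lies in the fiber
  have hbox : ∀ x : C.Msg,
      (∀ s, ∃ y : C.Msg, C.ge estar y = z0 ∧ y s = x s) → C.ge estar x = z0 := by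
    intro x hx
    exact box_subset_fiber (ι := {v // v ∈ I.S}) (α := fun s => C.srcA s.1)
      (Z := C.edgeA estar) (C.ge estar) hindep z0 x ⟨y0, hy0⟩ hx
  have hmemA : ∀ (s : {v // v ∈ I.S}) (a : C.srcA s.1),
      a ∈ srcSupp I R n C estar z0 s ↔ ∃ y : C.Msg, C.ge estar y = z0 ∧ y s = a := by
    intro s a
    unfold srcSupp
    simp only [Finset.mem_image, Finset.mem_filter, Finset.mem_univ, true_and]
  have key : ∀ x' : rMsg I R n C estar z0, C.ge estar (emb I R n C estar z0 x') = z0 := by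
    intro x'
    apply hbox
    intro s
    exact (hmemA s _).mp ((x' s).2 s.2)
  have hNE : ∀ v : I.V, Nonempty (rSrcA I R n C estar z0 v) := by
    intro v
    by_cases hv : v ∈ I.S
    · exact ⟨⟨y0 ⟨v, hv⟩, fun h => (hmemA ⟨v, h⟩ _).mpr ⟨y0, hy0, rfl⟩⟩⟩
    · exact ⟨⟨Classical.arbitrary _, fun h => absurd h hv⟩⟩
  -- the fiber is exactly the box of supports
  have hfiber_box : Fz = Fintype.piFinset (srcSupp I R n C estar z0) := by
    ext y
    simp only [Fintype.mem_piFinset, hFz, Finset.mem_filter, Finset.mem_univ, true_and]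
    constructor
    · intro h s; exact (hmemA s _).mpr ⟨y, h, rfl⟩
    · intro h; exact hbox y fun s => (hmemA s _).mp (h s)
  have hcard_box : Fz.card = ∏ s, (srcSupp I R n C estar z0 s).card := by
    rw [hfiber_box, Fintype.card_piFinset]
  -- cardinality bound per source
  have hAcard : ∀ s : {v // v ∈ I.S}, Fintype.card (C.srcA s.1)
      ≤ Fintype.card (C.edgeA estar) * (srcSupp I R n C estar z0 s).card := by
    intro s
    have h1 : Fintype.card C.Msg = ∏ j : {v // v ∈ I.S}, Fintype.card (C.srcA j.1) :=
      Fintype.card_pi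
    have h2 : ∏ j : {v // v ∈ I.S}, (srcSupp I R n C estar z0 j).card
        ≤ (srcSupp I R n C estar z0 s).card * ∏ j ∈ univ.erase s, Fintype.card (C.srcA j.1) := by
      rw [← Finset.mul_prod_erase univ _ (Finset.mem_univ s)]
      exact Nat.mul_le_mul le_rfl (Finset.prod_le_prod' fun j _ => Finset.card_le_univ _)
    have hP : 0 < ∏ j ∈ univ.erase s, Fintype.card (C.srcA j.1) :=
      Finset.prod_pos fun j _ => Fintype.card_pos
    have h3 : Fintype.card (C.srcA s.1) * ∏ j ∈ univ.erase s, Fintype.card (C.srcA j.1)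
        ≤ (Fintype.card (C.edgeA estar) * (srcSupp I R n C estar z0 s).card)
          * ∏ j ∈ univ.erase s, Fintype.card (C.srcA j.1) := by
      calc Fintype.card (C.srcA s.1) * ∏ j ∈ univ.erase s, Fintype.card (C.srcA j.1)
          = Fintype.card C.Msg :=
            (Finset.mul_prod_erase univ (fun j : {v // v ∈ I.S} => Fintype.card (C.srcA j.1))
              (Finset.mem_univ s)).trans h1.symm
        _ ≤ Fintype.card (C.edgeA estar) * Fz.card := hNle
        _ = Fintype.card (C.edgeA estar) * ∏ j, (srcSupp I R n C estar z0 j).card := by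
            rw [hcard_box]
        _ ≤ _ := by rw [mul_assoc]; exact Nat.mul_le_mul le_rfl h2
    exact Nat.le_of_mul_le_mul_right h3 hP
  -- rate bound in the reals
  have hrate : ∀ v (hv : v ∈ I.S), (2:ℝ) ^ ((n:ℝ) * reducedRate I R estar v)
      ≤ ((srcSupp I R n C estar z0 ⟨v, hv⟩).card : ℝ) := by
    intro v hv
    have hcap := C.capBound estar he
    have hrv := C.rate v hv
    unfold reducedRate
    rcases le_total (R v - I.cap estar) 0 with hle|hge
    · rw [max_eq_left hle, mul_zero, Real.rpow_zero]
      have hpos : 0 < (srcSupp I R n C estar z0 ⟨v, hv⟩).card :=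
        Finset.card_pos.mpr ⟨y0 ⟨v, hv⟩, (hmemA _ _).mpr ⟨y0, hy0, rfl⟩⟩
      exact_mod_cast hpos
    · rw [max_eq_right hge,
        show (n:ℝ) * (R v - I.cap estar) = (n:ℝ) * R v - (n:ℝ) * I.cap estar from by ring,
        Real.rpow_sub two_pos]
      have h2cap : (0:ℝ) < (2:ℝ) ^ ((n:ℝ) * I.cap estar) := Real.rpow_pos_of_pos two_pos _
      rw [div_le_iff₀ h2cap]
      have hAc := hAcard ⟨v, hv⟩
      calc (2:ℝ) ^ ((n:ℝ) * R v) ≤ (Fintype.card (C.srcA v) : ℝ) := hrv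
        _ ≤ (Fintype.card (C.edgeA estar) : ℝ)
            * ((srcSupp I R n C estar z0 ⟨v, hv⟩).card : ℝ) := by exact_mod_cast hAc
        _ ≤ ((srcSupp I R n C estar z0 ⟨v, hv⟩).card : ℝ)
            * (2:ℝ) ^ ((n:ℝ) * I.cap estar) := by
            rw [mul_comm]
            exact mul_le_mul_of_nonneg_left hcap (Nat.cast_nonneg _)
  -- cardinality of the restricted alphabets
  have hcardA : ∀ (v) (hv : v ∈ I.S) (fi : Fintype (rSrcA I R n C estar z0 v)),
      @Fintype.card _ fi = (srcSupp I R n C estar z0 ⟨v, hv⟩).card := by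
    intro v hv fi
    have e : rSrcA I R n C estar z0 v ≃ {a : C.srcA v // a ∈ srcSupp I R n C estar z0 ⟨v, hv⟩} :=
      Equiv.subtypeEquivRight fun a => ⟨fun h => h hv, fun h _ => h⟩
    exact (@Fintype.card_congr _ _ fi _ e).trans (Fintype.card_coe _)
  -- assemble the code on the reduced instance
  refine ⟨{ srcA := rSrcA I R n C estar z0
          , edgeA := C.edgeA
          , finSrc := rSrcA_fintype I R n C estar z0
          , finEdge := C.finEdge
          , neSrc := hNE
          , neEdge := C.neEdge
          , ge := fun e x => rGe I R n C estar z0 e x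
          , dec := rDec I R n C estar z0 hNE
          , local_enc := ?_
          , rate := ?_
          , capBound := fun e hef => C.capBound e (Finset.mem_of_mem_erase hef) }, ?_⟩
  · -- local encodability
    intro e he' x y hxy hedges
    refine C.local_enc e (Finset.mem_of_mem_erase he') _ _
      (fun s hs => congrArg Subtype.val (hxy s hs)) (fun fe hfe hfe2 => ?_)
    by_cases hfe' : fe = estar
    · subst hfe'
      rw [key x, key y]
    · exact hedges fe (Finset.mem_erase.mpr ⟨hfe', hfe⟩) hfe2
  · -- rate
    intro v hv
    rw [hcardA v hv]
    exact hrate v hv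
  · -- zero error
    intro t
    rw [zero_mul]
    have harg : ∀ (x' : rMsg I R n C estar z0),
        (fun fe : {e : I.V × I.V // e ∈ I.E ∧ e.2 = t.1} =>
          if h : fe.1 = estar then cast (congrArg C.edgeA h.symm) z0
          else rGe I R n C estar z0 fe.1 x')
        = fun fe : {e : I.V × I.V // e ∈ I.E ∧ e.2 = t.1} =>
          C.ge fe.1 (emb I R n C estar z0 x') := by
      intro x'
      funext fe
      by_cases h : fe.1 = estar
      · rw [dif_pos h]
        obtain ⟨e, hep⟩ := fe
        simp only at h
        subst h
        exact cast_eq_iff_heq.mpr (heq_of_eq (key x').symm)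
      · rw [dif_neg h]
        rfl
    have hcor : ∀ x' : rMsg I R n C estar z0,
        rDec I R n C estar z0 hNE t (fun f => rGe I R n C estar z0 f.1 x')
          = fun s : {v : I.V // v ∈ I.S ∧ I.demands v t.1} => x' ⟨s.1, s.2.1⟩ := by
      intro x'
      funext s
      unfold rDec
      dsimp only
      rw [harg x']
      have hd2 := hall t (emb I R n C estar z0 x')
      unfold NetworkCode.Correct at hd2
      have hd3 := congrFun hd2 s
      rw [hd3]
      have hcond : ∀ hS : s.1 ∈ I.S,
          emb I R n C estar z0 x' ⟨s.1, s.2.1⟩ ∈ srcSupp I R n C estar z0 ⟨s.1, hS⟩ :=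
        fun hS => (x' ⟨s.1, s.2.1⟩).2 hS
      refine (dif_pos hcond).trans ?_
      exact Subtype.ext rfl
    suffices hsuff : ∀ (p : rMsg I R n C estar z0 → Prop) (ip : DecidablePred p),
        (∀ x', ¬ p x') → (((@Finset.filter _ p ip univ).card : ℕ) : ℝ) ≤ 0 by
      apply hsuff
      intro x'
      exact not_not_intro (hcor x')
    intro p ip hp
    have hempty : (@Finset.filter _ p ip univ) = ∅ :=
      Finset.filter_eq_empty_iff.mpr fun {x} _ => hp x
    rw [hempty]
    simp
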